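/- If A is the adjacency matrix of an undirected graph with no self-loops (A symmetric, a_{ij} ∈ {0,1}, zero diagonal), then the covariance matrix of the joint spectral measure is the graph Laplacian: for i ≠ j, E(X_iX_j) − E(X_i)E(X_j) = −a_{ij}, and for each i, E(X_i²) − E(X_i)² = ∑_{j} a_{ij} (the degree of vertex i). Explicitly, for i ≠ j: ∑_{σ∈S_N} ε(σ) λ_{σ(i)} λ_{σ(j)} ∏_{l} p_{lσ(l)} = −a_{ij}, and (A²)_{ii} = ∑_j a_{ij} while ∑_{σ} ε(σ) λ_{σ(i)} ∏_l p_{lσ(l)} = 0. -/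

import Mathlib

open Matrix BigOperators

private lemma det_as_sum' {N : ℕ} (M : Matrix (Fin N) (Fin N) ℝ) :
    M.det = ∑ σ : Equiv.Perm (Fin N),
      ((Equiv.Perm.sign σ : ℤ) : ℝ) * ∏ l, M l (σ l) := by
  rw [← Matrix.det_transpose, Matrix.det_apply]
  refine Finset.sum_congr rfl fun σ _ => ?_
  simp [Matrix.transpose_apply, Units.smul_def, zsmul_eq_mul]

private lemma det_updateRow_sum'' {N : ℕ} (M : Matrix (Fin N) (Fin N) ℝ) (j : Fin N)
    (c : Fin N → ℝ) (v : Fin N → Fin N → ℝ) :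
    (M.updateRow j (∑ k, c k • v k)).det = ∑ k, c k * (M.updateRow j (v k)).det := by
  have h : ∀ x, (M.updateRow j x).det =
      Matrix.detRowAlternating (Function.update M j x) := fun x => rfl
  rw [h, (Matrix.detRowAlternating (R := ℝ)).map_update_sum Finset.univ j (fun k => c k • v k) M]
  refine Finset.sum_congr rfl fun k _ => ?_
  rw [h]
  exact ((Matrix.detRowAlternating (R := ℝ)).map_update_smul M j (c k) (v k)).trans (smul_eq_mul _ _)

theorem covariance_eq_laplacian (N : ℕ)
    (A P : Matrix (Fin N) (Fin N) ℝ) (lam : Fin N → ℝ)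
    (hsymm : A.IsSymm)
    (h01 : ∀ i j : Fin N, A i j = 0 ∨ A i j = 1)
    (hdiag : ∀ i : Fin N, A i i = 0)
    (hdecomp : A = P * Matrix.diagonal lam * Pᵀ)
    (horth : P * Pᵀ = 1)
    (hdet : P.det = 1) :
    (∀ i j : Fin N, i ≠ j →
        ∑ σ : Equiv.Perm (Fin N),
            ((Equiv.Perm.sign σ : ℤ) : ℝ) * lam (σ i) * lam (σ j) *
              ∏ l : Fin N, P l (σ l)
          = -(A i j)) ∧
    (∀ i : Fin N, (A ^ 2) i i = ∑ j : Fin N, A i j) ∧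
    (∀ i : Fin N,
        ∑ σ : Equiv.Perm (Fin N),
            ((Equiv.Perm.sign σ : ℤ) : ℝ) * lam (σ i) * ∏ l : Fin N, P l (σ l)
          = 0) := by
  have hPtP : Pᵀ * P = 1 := mul_eq_one_comm.mp horth
  have hAP : A * P = P * Matrix.diagonal lam := by
    rw [hdecomp, Matrix.mul_assoc, Matrix.mul_assoc, hPtP, Matrix.mul_one]
  -- the row (fun k => P i k * lam k) is a linear combination of rows of P
  have hrow : ∀ i : Fin N, (fun k => P i k * lam k) = ∑ j : Fin N, A i j • P j := by
    intro i
    funext k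
    have := congrFun (congrFun hAP i) k
    rw [Matrix.mul_apply, Matrix.mul_diagonal] at this
    rw [← this]
    simp [Finset.sum_apply]
  -- determinant of P with rows from {updated} duplicated
  have hdup : ∀ (i k : Fin N), k ≠ i → (P.updateRow i (P k)).det = 0 := by
    intro i k hk
    exact Matrix.det_zero_of_row_eq hk.symm
      (by rw [Matrix.updateRow_self, Matrix.updateRow_ne hk])
  constructor
  · -- pair covariance
    intro i j hij
    set Ri : Fin N → ℝ := fun k => P i k * lam k with hRi
    set Rj : Fin N → ℝ := fun k => P j k * lam k with hRj
    set M2 : Matrix (Fin N) (Fin N) ℝ := (P.updateRow i Ri).updateRow j Rj with hM2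
    have hprod : ∀ σ : Equiv.Perm (Fin N),
        ∏ l, M2 l (σ l) = lam (σ i) * lam (σ j) * ∏ l, P l (σ l) := by
      intro σ
      have hji : j ≠ i := hij.symm
      have hjmem : j ∈ Finset.univ.erase i :=
        Finset.mem_erase.mpr ⟨hji, Finset.mem_univ j⟩
      rw [← Finset.mul_prod_erase _ (fun l => M2 l (σ l)) (Finset.mem_univ i),
          ← Finset.mul_prod_erase _ (fun l => M2 l (σ l)) hjmem,
          ← Finset.mul_prod_erase _ (fun l => P l (σ l)) (Finset.mem_univ i),
          ← Finset.mul_prod_erase _ (fun l => P l (σ l)) hjmem]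
      have h1 : M2 i (σ i) = lam (σ i) * P i (σ i) := by
        rw [hM2, Matrix.updateRow_ne hij, Matrix.updateRow_self]; ring
      have h2 : M2 j (σ j) = lam (σ j) * P j (σ j) := by
        rw [hM2, Matrix.updateRow_self]; ring
      have h3 : ∀ l ∈ (Finset.univ.erase i).erase j, M2 l (σ l) = P l (σ l) := by
        intro l hl
        rw [Finset.mem_erase, Finset.mem_erase] at hl
        rw [hM2, Matrix.updateRow_ne hl.1, Matrix.updateRow_ne hl.2.1]
      rw [h1, h2, Finset.prod_congr rfl h3]
      ring
    have hsum : (∑ σ : Equiv.Perm (Fin N),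
        ((Equiv.Perm.sign σ : ℤ) : ℝ) * lam (σ i) * lam (σ j) *
          ∏ l : Fin N, P l (σ l)) = M2.det := by
      rw [det_as_sum']
      refine Finset.sum_congr rfl fun σ _ => ?_
      rw [hprod σ]; ring
    rw [hsum]
    -- expand det M2 by multilinearity in row j then row i
    have hcomm : ∀ (r s : Fin N → ℝ),
        (P.updateRow i r).updateRow j s = (P.updateRow j s).updateRow i r := by
      intro r s
      ext a b
      by_cases hai : a = i <;> by_cases haj : a = j
      · exact absurd (hai ▸ haj ▸ rfl) hij
      · subst hai
        rw [Matrix.updateRow_ne haj, Matrix.updateRow_self, Matrix.updateRow_self]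
      · subst haj
        rw [Matrix.updateRow_self, Matrix.updateRow_ne hai, Matrix.updateRow_self]
      · rw [Matrix.updateRow_ne haj, Matrix.updateRow_ne hai,
            Matrix.updateRow_ne hai, Matrix.updateRow_ne haj]
    set D : Fin N → Fin N → ℝ :=
      fun l k => ((P.updateRow j (P l)).updateRow i (P k)).det with hD
    have e1 : M2.det = ∑ l, A j l * (∑ k, A i k * D l k) := by
      rw [hM2, show Rj = ∑ l, A j l • P l from hrow j, det_updateRow_sum'' (P.updateRow i Ri) j (A j) P]
      refine Finset.sum_congr rfl fun l _ => ?_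
      congr 1
      rw [hcomm, show Ri = ∑ k, A i k • P k from hrow i, det_updateRow_sum'' (P.updateRow j (P l)) i (A i) P]
    -- values of D
    have hrow_i : ∀ l k, ((P.updateRow j (P l)).updateRow i (P k)) i = P k := fun l k =>
      Matrix.updateRow_self
    have hrow_j : ∀ l k, ((P.updateRow j (P l)).updateRow i (P k)) j = P l := fun l k => by
      rw [Matrix.updateRow_ne hij.symm, Matrix.updateRow_self]
    have hrow_o : ∀ l k a, a ≠ i → a ≠ j → ((P.updateRow j (P l)).updateRow i (P k)) a = P a :=
      fun l k a hai haj => by rw [Matrix.updateRow_ne hai, Matrix.updateRow_ne haj]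
    have hDk : ∀ l k, k ≠ i → k ≠ j → D l k = 0 := by
      intro l k hki hkj
      exact Matrix.det_zero_of_row_eq (Ne.symm hki) ((hrow_i l k).trans (hrow_o l k k hki hkj).symm)
    have hDl : ∀ l k, l ≠ i → l ≠ j → D l k = 0 := by
      intro l k hli hlj
      exact Matrix.det_zero_of_row_eq (Ne.symm hlj) ((hrow_j l k).trans (hrow_o l k l hli hlj).symm)
    have hDjj : D j j = 0 :=
      Matrix.det_zero_of_row_eq hij ((hrow_i j j).trans (hrow_j j j).symm)
    have hDij : D i j = -1 := by
      have hmat : (P.updateRow j (P i)).updateRow i (P j)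
          = P.submatrix (Equiv.swap i j) id := by
        ext a b
        by_cases hai : a = i <;> by_cases haj : a = j
        · exact absurd (hai ▸ haj ▸ rfl) hij
        · subst hai
          rw [Matrix.updateRow_self, Matrix.submatrix_apply, Equiv.swap_apply_left, id]
        · subst haj
          rw [Matrix.updateRow_ne hai, Matrix.updateRow_self, Matrix.submatrix_apply,
              Equiv.swap_apply_right, id]
        · rw [Matrix.updateRow_ne hai, Matrix.updateRow_ne haj, Matrix.submatrix_apply,
              Equiv.swap_apply_of_ne_of_ne hai haj, id]
      rw [hD]
      show ((P.updateRow j (P i)).updateRow i (P j)).det = -1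
      rw [hmat, Matrix.det_permute, Equiv.Perm.sign_swap hij, hdet]
      norm_num
    have hAji : A j i = A i j := by
      have := congrFun (congrFun hsymm i) j
      simpa [Matrix.transpose_apply] using this
    have hAijsq : A i j * A i j = A i j := by
      rcases h01 i j with h | h <;> rw [h] <;> ring
    have hinner : ∀ l, (∑ k, A i k * D l k) = A i j * D l j := by
      intro l
      have hvan : ∀ k ∈ Finset.univ, k ∉ ({i, j} : Finset (Fin N)) → A i k * D l k = 0 := by
        intro k _ hk
        simp only [Finset.mem_insert, Finset.mem_singleton, not_or] at hk
        rw [hDk l k hk.1 hk.2, mul_zero]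
      rw [← Finset.sum_subset (Finset.subset_univ ({i, j} : Finset (Fin N))) hvan,
          Finset.sum_pair hij, hdiag i, zero_mul, zero_add]
    rw [e1]
    have hvan2 : ∀ l ∈ Finset.univ, l ∉ ({i, j} : Finset (Fin N)) →
        A j l * (∑ k, A i k * D l k) = 0 := by
      intro l _ hl
      simp only [Finset.mem_insert, Finset.mem_singleton, not_or] at hl
      rw [hinner l, hDl l j hl.1 hl.2, mul_zero, mul_zero]
    rw [← Finset.sum_subset (Finset.subset_univ ({i, j} : Finset (Fin N))) hvan2,
        Finset.sum_pair hij, hinner i, hinner j, hDij, hDjj, hAji, hdiag j]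
    rw [mul_zero, mul_zero, add_zero]
    nlinarith [hAijsq]
  constructor
  · intro i
    rw [pow_two, Matrix.mul_apply]
    refine Finset.sum_congr rfl fun j _ => ?_
    have hs : A j i = A i j := by
      have := congrFun (congrFun hsymm i) j
      simpa [Matrix.transpose_apply] using this
    rcases h01 i j with h | h <;> rw [hs, h] <;> ring
  · intro i
    set Ri : Fin N → ℝ := fun k => P i k * lam k with hRi
    have hsum : (∑ σ : Equiv.Perm (Fin N),
        ((Equiv.Perm.sign σ : ℤ) : ℝ) * lam (σ i) *
          ∏ l : Fin N, P l (σ l)) = (P.updateRow i Ri).det := by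
      rw [det_as_sum']
      refine Finset.sum_congr rfl fun σ _ => ?_
      rw [← Finset.mul_prod_erase _ (fun l => (P.updateRow i Ri) l (σ l)) (Finset.mem_univ i),
          ← Finset.mul_prod_erase _ (fun l => P l (σ l)) (Finset.mem_univ i)]
      have h3 : ∀ l ∈ Finset.univ.erase i,
          (P.updateRow i Ri) l (σ l) = P l (σ l) := by
        intro l hl
        rw [Finset.mem_erase] at hl
        rw [Matrix.updateRow_ne hl.1]
      rw [Finset.prod_congr rfl h3, Matrix.updateRow_self]
      show ((Equiv.Perm.sign σ : ℤ) : ℝ) * lam (σ i) * (P i (σ i) * _) =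
        ((Equiv.Perm.sign σ : ℤ) : ℝ) * (P i (σ i) * lam (σ i) * _)
      ring
    rw [hsum, hRi, hrow i, Matrix.det_updateRow_sum, hdiag i, zero_smul]
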